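/- Let n be a positive natural number, let M be an n×n complex Hurwitz matrix, and let N be an n×n positive semidefinite Hermitian matrix. Then the function s ↦ exp(s·M)·N·exp(s·Mᴴ) is integrable on (0, ∞), and the matrix F := ∫₀^∞ exp(s·M)·N·exp(s·Mᴴ) ds is a positive semidefinite Hermitian matrix satisfying the continuous-time Lyapunov equation M·F + F·Mᴴ + N = 0. -/

import Mathlib

open Matrix MeasureTheory NormedSpace
open scoped ComplexOrder

/-- A square complex matrix is Hurwitz if every eigenvalue has
strictly negative real part. -/
def IsHurwitz {n : ℕ} (M : Matrix (Fin n) (Fin n) ℂ) : Prop :=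
  ∀ z ∈ spectrum ℂ M, z.re < 0

/-- The (entrywise) integral `∫₀^∞ exp(s M) N exp(s Mᴴ) ds`. -/
noncomputable def lyapunovIntegral {n : ℕ} (M N : Matrix (Fin n) (Fin n) ℂ) :
    Matrix (Fin n) (Fin n) ℂ :=
  fun i j => ∫ s in Set.Ioi (0 : ℝ), (exp (s • M) * N * exp (s • Mᴴ)) i j

open Nat

namespace LyapAux

attribute [local instance] Matrix.linftyOpNormedRing Matrix.linftyOpNormedAlgebra

variable {n : ℕ}

lemma exp_smul_one_eq (c : ℂ) :
    exp (c • (1 : Matrix (Fin n) (Fin n) ℂ)) = Complex.exp c • 1 := by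
  have h := map_exp (algebraMap ℂ (Matrix (Fin n) (Fin n) ℂ))
    (continuous_algebraMap _ _) c
  rw [← Algebra.algebraMap_eq_smul_one, ← Algebra.algebraMap_eq_smul_one,
    Complex.exp_eq_exp_ℂ]
  exact h.symm

lemma exp_smul_mulVec (M : Matrix (Fin n) (Fin n) ℂ) (μ : ℂ) (k : ℕ) (v : Fin n → ℂ)
    (hv : ((M - μ • 1) ^ k) *ᵥ v = 0) (s : ℝ) :
    exp (s • M) *ᵥ v = Complex.exp ((s : ℂ) * μ) •
      ∑ l ∈ Finset.range k, ((((s : ℂ) ^ l) * (((l ! : ℕ) : ℂ))⁻¹) •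
        (((M - μ • 1) ^ l) *ᵥ v)) := by
  set A := M - μ • 1 with hA
  have hsplit : s • M = ((s : ℂ) * μ) • (1 : Matrix (Fin n) (Fin n) ℂ) + s • A := by
    have h0 : M = μ • 1 + A := by rw [hA]; abel
    rw [h0, smul_add]
    rw [← smul_assoc]
    norm_num [Complex.real_smul]
  have hcomm : Commute (((s : ℂ) * μ) • (1 : Matrix (Fin n) (Fin n) ℂ)) (s • A) :=
    (Commute.one_left (s • A)).smul_left _
  have hexp : exp (s • M) = Complex.exp ((s : ℂ) * μ) • exp (s • A) := by
    rw [hsplit, Matrix.exp_add_of_commute _ _ hcomm, exp_smul_one_eq, smul_mul_assoc, one_mul]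
  -- now exp (s • A) *ᵥ v
  classical
  let L : Matrix (Fin n) (Fin n) ℂ →ₗ[ℂ] (Fin n → ℂ) :=
    { toFun := fun X => X *ᵥ v
      map_add' := fun X Y => add_mulVec X Y v
      map_smul' := fun c X => smul_mulVec c X v }
  haveI : FiniteDimensional ℂ (Matrix (Fin n) (Fin n) ℂ) := by infer_instance
  let L' : Matrix (Fin n) (Fin n) ℂ →L[ℂ] (Fin n → ℂ) := LinearMap.toContinuousLinearMap L
  have hsum : Summable (fun l : ℕ => ((l ! : ℂ))⁻¹ • (s • A) ^ l) :=
    expSeries_summable' (𝕂 := ℂ) (s • A)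
  have hLtsum : exp (s • A) *ᵥ v = ∑' l : ℕ, ((l ! : ℂ))⁻¹ • ((s • A) ^ l *ᵥ v) := by
    have : exp (s • A) *ᵥ v = L' (exp (s • A)) := rfl
    rw [this, exp_eq_tsum ℂ, L'.map_tsum hsum]
    congr 1; funext l
    show L ((l ! : ℂ)⁻¹ • (s • A) ^ l) = _
    rw [L.map_smul]; rfl
  have hterm : ∀ l : ℕ, ((l ! : ℂ))⁻¹ • ((s • A) ^ l *ᵥ v)
      = (((s : ℂ) ^ l) * ((l ! : ℂ))⁻¹) • (A ^ l *ᵥ v) := by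
    intro l
    have hs : (s : ℝ) ^ l • (A ^ l *ᵥ v) = ((s : ℂ) ^ l) • (A ^ l *ᵥ v) := by
      funext i
      simp [Complex.real_smul]
    rw [smul_pow, smul_mulVec, hs, smul_smul, mul_comm]
  have hvanish : ∀ l : ℕ, l ∉ Finset.range k → ((l ! : ℂ))⁻¹ • ((s • A) ^ l *ᵥ v) = 0 := by
    intro l hl
    rw [Finset.mem_range, not_lt] at hl
    have : A ^ l *ᵥ v = 0 := by
      have : A ^ l = A ^ (l - k) * A ^ k := by rw [← pow_add, Nat.sub_add_cancel hl]
      rw [this, ← mulVec_mulVec, hv, mulVec_zero]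
    rw [hterm, this, smul_zero]
  rw [hexp, smul_mulVec, hLtsum, tsum_eq_sum hvanish]
  congr 1
  exact Finset.sum_congr rfl fun l _ => hterm l

end LyapAux

namespace LyapAux2
open LyapAux
attribute [local instance] Matrix.linftyOpNormedRing Matrix.linftyOpNormedAlgebra

variable {n : ℕ}

/-- Vectors along which `exp (s • M)` decays exponentially. -/
noncomputable def goodSet (M : Matrix (Fin n) (Fin n) ℂ) : Submodule ℂ (Fin n → ℂ) where
  carrier := {v | ∃ C ε : ℝ, 0 < ε ∧ ∀ s : ℝ, 0 ≤ s → ∀ i,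
    ‖(exp (s • M) *ᵥ v) i‖ ≤ C * Real.exp (-(ε * s))}
  zero_mem' := ⟨0, 1, one_pos, fun s _ i => by simp [mulVec_zero]⟩
  add_mem' := by
    rintro a b ⟨C₁, ε₁, hε₁, h₁⟩ ⟨C₂, ε₂, hε₂, h₂⟩
    refine ⟨max C₁ 0 + max C₂ 0, min ε₁ ε₂, lt_min hε₁ hε₂, fun s hs i => ?_⟩
    have key : ∀ (C ε' : ℝ), 0 < ε' → min ε₁ ε₂ ≤ ε' →
        ‖(exp (s • M) *ᵥ a) i‖ ≤ C * Real.exp (-(ε' * s)) →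
        ∀ (w : Fin n → ℂ), w = a →
        ‖(exp (s • M) *ᵥ w) i‖ ≤ max C 0 * Real.exp (-(min ε₁ ε₂ * s)) := by
      intro C ε' hε' hle hb w hw
      subst hw
      calc ‖(exp (s • M) *ᵥ w) i‖ ≤ C * Real.exp (-(ε' * s)) := hb
        _ ≤ max C 0 * Real.exp (-(ε' * s)) :=
            mul_le_mul_of_nonneg_right (le_max_left _ _) (Real.exp_nonneg _)
        _ ≤ max C 0 * Real.exp (-(min ε₁ ε₂ * s)) := by
            apply mul_le_mul_of_nonneg_left _ (le_max_right _ _)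
            apply Real.exp_le_exp.2
            have := mul_le_mul_of_nonneg_right hle hs
            linarith
    have ha' := key C₁ ε₁ hε₁ (min_le_left _ _) (h₁ s hs i) a rfl
    have hb' : ‖(exp (s • M) *ᵥ b) i‖
        ≤ max C₂ 0 * Real.exp (-(min ε₁ ε₂ * s)) := by
      calc ‖(exp (s • M) *ᵥ b) i‖ ≤ C₂ * Real.exp (-(ε₂ * s)) := h₂ s hs i
        _ ≤ max C₂ 0 * Real.exp (-(ε₂ * s)) :=
            mul_le_mul_of_nonneg_right (le_max_left _ _) (Real.exp_nonneg _)
        _ ≤ max C₂ 0 * Real.exp (-(min ε₁ ε₂ * s)) := by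
            apply mul_le_mul_of_nonneg_left _ (le_max_right _ _)
            apply Real.exp_le_exp.2
            have := mul_le_mul_of_nonneg_right (min_le_right ε₁ ε₂) hs
            linarith
    calc ‖(exp (s • M) *ᵥ (a + b)) i‖
        = ‖(exp (s • M) *ᵥ a) i + (exp (s • M) *ᵥ b) i‖ := by
          rw [mulVec_add]; rfl
      _ ≤ ‖(exp (s • M) *ᵥ a) i‖ + ‖(exp (s • M) *ᵥ b) i‖ :=
          norm_add_le _ _
      _ ≤ max C₁ 0 * Real.exp (-(min ε₁ ε₂ * s)) + max C₂ 0 * Real.exp (-(min ε₁ ε₂ * s)) :=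
          add_le_add ha' hb'
      _ = (max C₁ 0 + max C₂ 0) * Real.exp (-(min ε₁ ε₂ * s)) := by ring
  smul_mem' := by
    rintro c v ⟨C, ε, hε, h⟩
    refine ⟨‖c‖ * C, ε, hε, fun s hs i => ?_⟩
    rw [mulVec_smul]
    have : ((c • (exp (s • M) *ᵥ v)) i) = c * ((exp (s • M) *ᵥ v) i) := rfl
    rw [this, norm_mul, mul_assoc]
    exact mul_le_mul_of_nonneg_left (h s hs i) (norm_nonneg c)

lemma gen_eigenvec_mem_goodSet (M : Matrix (Fin n) (Fin n) ℂ) (μ : ℂ) (hμ : μ.re < 0)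
    (k : ℕ) (v : Fin n → ℂ) (hv : ((M - μ • 1) ^ k) *ᵥ v = 0) : v ∈ goodSet M := by
  set ε : ℝ := -μ.re / 2 with hεdef
  have hε : 0 < ε := by simp only [hεdef]; linarith
  refine ⟨∑ l ∈ Finset.range k, (∑ i, ‖(((M - μ • 1) ^ l) *ᵥ v) i‖) / ε ^ l,
    ε, hε, fun s hs i => ?_⟩
  rw [exp_smul_mulVec M μ k v hv s]
  have happ : ((Complex.exp ((s : ℂ) * μ) •
      ∑ l ∈ Finset.range k, ((((s : ℂ) ^ l) * (((l ! : ℕ) : ℂ))⁻¹) •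
        (((M - μ • 1) ^ l) *ᵥ v))) i)
      = Complex.exp ((s : ℂ) * μ) *
        ∑ l ∈ Finset.range k, (((s : ℂ) ^ l) * (((l ! : ℕ) : ℂ))⁻¹) *
          ((((M - μ • 1) ^ l) *ᵥ v) i) := by
    rw [Pi.smul_apply, smul_eq_mul, Finset.sum_apply]
    congr 1
  rw [happ, norm_mul, Complex.norm_exp]
  have hre : ((s : ℂ) * μ).re = s * μ.re := by simp [Complex.mul_re]
  rw [hre]
  have hsum_le : ‖∑ l ∈ Finset.range k,
        (((s : ℂ) ^ l) * (((l ! : ℕ) : ℂ))⁻¹) * ((((M - μ • 1) ^ l) *ᵥ v) i)‖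
      ≤ ∑ l ∈ Finset.range k, (Real.exp (ε * s) / ε ^ l) *
          (∑ i', ‖(((M - μ • 1) ^ l) *ᵥ v) i'‖) := by
    refine (norm_sum_le _ _).trans (Finset.sum_le_sum fun l _ => ?_)
    rw [norm_mul, norm_mul, norm_inv]
    have h1 : ‖(s : ℂ) ^ l‖ = s ^ l := by
      rw [norm_pow, Complex.norm_real, Real.norm_of_nonneg hs]
    have h2 : ‖((l ! : ℕ) : ℂ)‖ = (l ! : ℝ) := by
      rw [Complex.norm_natCast]
    rw [h1, h2]
    have hpow : s ^ l * ((l ! : ℝ))⁻¹ ≤ Real.exp (ε * s) / ε ^ l := by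
      have base : (ε * s) ^ l / (l ! : ℝ) ≤ Real.exp (ε * s) := by
        refine le_trans ?_ (Real.sum_le_exp_of_nonneg (by positivity) (l + 1))
        exact Finset.single_le_sum (f := fun m => (ε * s) ^ m / (m ! : ℝ))
          (fun m _ => by positivity) (Finset.self_mem_range_succ l)
      rw [le_div_iff₀ (pow_pos hε l)]
      calc s ^ l * ((l ! : ℝ))⁻¹ * ε ^ l = (ε * s) ^ l / (l ! : ℝ) := by
            rw [mul_pow]; ring
        _ ≤ Real.exp (ε * s) := base
    calc s ^ l * ((l ! : ℝ))⁻¹ * ‖(((M - μ • 1) ^ l) *ᵥ v) i‖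
        ≤ (Real.exp (ε * s) / ε ^ l) * ‖(((M - μ • 1) ^ l) *ᵥ v) i‖ :=
          mul_le_mul_of_nonneg_right hpow (norm_nonneg _)
      _ ≤ (Real.exp (ε * s) / ε ^ l) * ∑ i', ‖(((M - μ • 1) ^ l) *ᵥ v) i'‖ := by
          refine mul_le_mul_of_nonneg_left ?_ (by positivity)
          exact Finset.single_le_sum (fun i' _ => norm_nonneg _) (Finset.mem_univ i)
  calc Real.exp (s * μ.re) * ‖∑ l ∈ Finset.range k,
        (((s : ℂ) ^ l) * (((l ! : ℕ) : ℂ))⁻¹) * ((((M - μ • 1) ^ l) *ᵥ v) i)‖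
      ≤ Real.exp (s * μ.re) * ∑ l ∈ Finset.range k, (Real.exp (ε * s) / ε ^ l) *
          (∑ i', ‖(((M - μ • 1) ^ l) *ᵥ v) i'‖) :=
        mul_le_mul_of_nonneg_left hsum_le (Real.exp_nonneg _)
    _ = (∑ l ∈ Finset.range k,
          (∑ i', ‖(((M - μ • 1) ^ l) *ᵥ v) i'‖) / ε ^ l) * Real.exp (-(ε * s)) := by
        have hterm : ∀ l, (Real.exp (ε * s) / ε ^ l) *
            (∑ i', ‖(((M - μ • 1) ^ l) *ᵥ v) i'‖)
            = Real.exp (ε * s) *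
              ((∑ i', ‖(((M - μ • 1) ^ l) *ᵥ v) i'‖) / ε ^ l) := fun l => by
          ring
        rw [Finset.sum_congr rfl fun l _ => hterm l, ← Finset.mul_sum, ← mul_assoc,
          ← Real.exp_add]
        have harg : s * μ.re + ε * s = -(ε * s) := by rw [hεdef]; ring
        rw [harg, mul_comm]

lemma top_le_goodSet (M : Matrix (Fin n) (Fin n) ℂ) (hM : IsHurwitz M)
    (v : Fin n → ℂ) : v ∈ goodSet M := by
  have htop := Module.End.iSup_maxGenEigenspace_eq_top (Matrix.toLinAlgEquiv' (R := ℂ) M)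
  have hv : v ∈ (⊤ : Submodule ℂ (Fin n → ℂ)) := trivial
  rw [← htop] at hv
  refine (iSup_le fun μ => ?_ : _ ≤ goodSet M) hv
  intro w hw
  rcases eq_or_ne w 0 with rfl | hw0
  · exact (goodSet M).zero_mem
  obtain ⟨k, hk⟩ := (Module.End.mem_maxGenEigenspace _ _ _).1 hw
  have he : Matrix.toLinAlgEquiv' M - μ • 1
      = Matrix.toLinAlgEquiv' (M - μ • 1) := by
    rw [map_sub]
    congr 1
    rw [← Algebra.algebraMap_eq_smul_one, ← Algebra.algebraMap_eq_smul_one,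
      AlgEquiv.commutes]
  have hmat : ((M - μ • 1) ^ k) *ᵥ w = 0 := by
    rw [← Matrix.toLinAlgEquiv'_apply, map_pow, ← he]
    exact hk
  have hspec : μ ∈ spectrum ℂ M := by
    by_contra hns
    have hunit : IsUnit ((M - μ • 1) ^ k) := by
      have h1 : IsUnit (algebraMap ℂ (Matrix (Fin n) (Fin n) ℂ) μ - M) :=
        spectrum.notMem_iff.1 hns
      have h2 : IsUnit (M - μ • 1) := by
        rw [← Algebra.algebraMap_eq_smul_one] at *
        simpa using h1.neg
      exact h2.pow k
    obtain ⟨u, hu⟩ := hunit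
    apply hw0
    calc w = (1 : Matrix (Fin n) (Fin n) ℂ) *ᵥ w := (one_mulVec w).symm
      _ = ((↑u⁻¹ : Matrix (Fin n) (Fin n) ℂ) * ((M - μ • 1) ^ k)) *ᵥ w := by
          rw [← hu, Units.inv_mul]
      _ = (↑u⁻¹ : Matrix (Fin n) (Fin n) ℂ) *ᵥ (((M - μ • 1) ^ k) *ᵥ w) := by
          rw [mulVec_mulVec]
      _ = 0 := by rw [hmat, mulVec_zero]
  exact gen_eigenvec_mem_goodSet M μ (hM μ hspec) k w hmat

lemma decay (hn : 0 < n) (M : Matrix (Fin n) (Fin n) ℂ) (hM : IsHurwitz M) :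
    ∃ C ε : ℝ, 0 < ε ∧ ∀ s : ℝ, 0 ≤ s → ∀ i j,
      ‖exp (s • M) i j‖ ≤ C * Real.exp (-(ε * s)) := by
  classical
  have hcol : ∀ j : Fin n, ∃ C ε : ℝ, 0 < ε ∧ ∀ s : ℝ, 0 ≤ s → ∀ i,
      ‖exp (s • M) i j‖ ≤ C * Real.exp (-(ε * s)) := by
    intro j
    obtain ⟨C, ε, hε, h⟩ := top_le_goodSet M hM (Pi.single j 1)
    refine ⟨C, ε, hε, fun s hs i => ?_⟩
    have := h s hs i
    rw [mulVec_single] at this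
    simpa using this
  choose Cf εf hεf hbf using hcol
  haveI : Nonempty (Fin n) := ⟨⟨0, hn⟩⟩
  refine ⟨∑ j, max (Cf j) 0, Finset.univ.inf' Finset.univ_nonempty εf, ?_, ?_⟩
  · rw [Finset.lt_inf'_iff]
    exact fun j _ => hεf j
  intro s hs i j
  set ε := Finset.univ.inf' Finset.univ_nonempty εf with hε
  calc ‖exp (s • M) i j‖ ≤ Cf j * Real.exp (-(εf j * s)) := hbf j s hs i
    _ ≤ max (Cf j) 0 * Real.exp (-(ε * s)) := by
        refine mul_le_mul (le_max_left _ _) (Real.exp_le_exp.2 ?_) (Real.exp_nonneg _)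
          (le_max_right _ _)
        have hle : ε ≤ εf j := Finset.inf'_le _ (Finset.mem_univ j)
        have := mul_le_mul_of_nonneg_right hle hs
        linarith
    _ ≤ (∑ j', max (Cf j') 0) * Real.exp (-(ε * s)) := by
        refine mul_le_mul_of_nonneg_right ?_ (Real.exp_nonneg _)
        exact Finset.single_le_sum
          (fun j' _ => (le_max_right (Cf j') 0 : (0:ℝ) ≤ max (Cf j') 0))
          (Finset.mem_univ j)

end LyapAux2

namespace LyapMain
open LyapAux LyapAux2 Set
attribute [local instance] Matrix.linftyOpNormedRing Matrix.linftyOpNormedAlgebra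

variable {n : ℕ}

lemma smul_conjT (s : ℝ) (M : Matrix (Fin n) (Fin n) ℂ) : (s • M)ᴴ = s • Mᴴ := by
  ext i j
  simp [Matrix.conjTranspose_apply, Matrix.smul_apply, star_smul]

lemma exp_smul_conjT (s : ℝ) (M : Matrix (Fin n) (Fin n) ℂ) :
    exp (s • Mᴴ) = (exp (s • M))ᴴ := by
  rw [← smul_conjT, Matrix.exp_conjTranspose]

noncomputable def entryCLM (i j : Fin n) : Matrix (Fin n) (Fin n) ℂ →L[ℝ] ℂ :=
  haveI : FiniteDimensional ℝ (Matrix (Fin n) (Fin n) ℂ) := Module.Finite.trans ℂ _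
  LinearMap.toContinuousLinearMap
    { toFun := fun A => A i j
      map_add' := fun _ _ => rfl
      map_smul' := fun _ _ => rfl }

@[simp] lemma entryCLM_apply (i j : Fin n) (A : Matrix (Fin n) (Fin n) ℂ) :
    entryCLM i j A = A i j := rfl

lemma continuous_phi_entry (M N : Matrix (Fin n) (Fin n) ℂ) (i j : Fin n) :
    Continuous fun s : ℝ => (exp (s • M) * N * exp (s • Mᴴ)) i j := by
  have h1 : Continuous fun s : ℝ => exp (s • M) * N * exp (s • Mᴴ) :=
    ((exp_continuous.comp (continuous_id.smul continuous_const)).mul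
        continuous_const).mul
      (exp_continuous.comp (continuous_id.smul continuous_const))
  exact (entryCLM i j).continuous.comp h1

lemma hasDerivAt_phi_entry (M N : Matrix (Fin n) (Fin n) ℂ) (s : ℝ) (i j : Fin n) :
    HasDerivAt (fun t : ℝ => (exp (t • M) * N * exp (t • Mᴴ)) i j)
      ((M * (exp (s • M) * N * exp (s • Mᴴ))
        + (exp (s • M) * N * exp (s • Mᴴ)) * Mᴴ) i j) s := by
  have hE : HasDerivAt (fun t : ℝ => exp (t • M)) (M * exp (s • M)) s := by
    have h := hasDerivAt_exp_smul_const' (𝕂 := ℝ) M s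
    exact h
  have hH : HasDerivAt (fun t : ℝ => exp (t • Mᴴ)) (exp (s • Mᴴ) * Mᴴ) s := by
    have h := hasDerivAt_exp_smul_const (𝕂 := ℝ) Mᴴ s
    exact h
  have hNH : HasDerivAt (fun t : ℝ => N * exp (t • Mᴴ)) (N * (exp (s • Mᴴ) * Mᴴ)) s :=
    hH.const_mul N
  have hprod := hE.mul hNH
  have hentry := (entryCLM i j).hasFDerivAt.comp_hasDerivAt s hprod
  have hentry2 : HasDerivAt (fun t : ℝ => (exp (t • M) * N * exp (t • Mᴴ)) i j)
      (entryCLM i j (M * exp (s • M) * (N * exp (s • Mᴴ))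
        + exp (s • M) * (N * (exp (s • Mᴴ) * Mᴴ)))) s := by
    simp only [Function.comp_def, mul_assoc, Pi.mul_apply] at hentry
    convert hentry using 1
    · rfl
    · funext t; simp only [entryCLM_apply, mul_assoc]
    · simp only [mul_assoc]
      rfl
  convert hentry2 using 1
  simp only [entryCLM_apply, Matrix.add_apply, mul_assoc]

lemma dot_integral (G : Matrix (Fin n) (Fin n) ℂ) (f : ℝ → Matrix (Fin n) (Fin n) ℂ)
    (hG : ∀ i j, G i j = ∫ s in Set.Ioi (0:ℝ), f s i j)
    (hf : ∀ i j, IntegrableOn (fun s => f s i j) (Set.Ioi 0)) (x y : Fin n → ℂ) :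
    x ⬝ᵥ (G *ᵥ y) = ∫ s in Set.Ioi (0:ℝ), x ⬝ᵥ (f s *ᵥ y) := by
  have hstep : ∀ i j, x i * (G i j * y j)
      = ∫ s in Set.Ioi (0:ℝ), x i * (f s i j * y j) := by
    intro i j
    rw [hG, ← MeasureTheory.integral_mul_const, ← MeasureTheory.integral_const_mul]
  calc x ⬝ᵥ (G *ᵥ y)
      = ∑ i, ∑ j, x i * (G i j * y j) := by
        simp [dotProduct, mulVec, Finset.mul_sum]
    _ = ∑ i, ∑ j, ∫ s in Set.Ioi (0:ℝ), x i * (f s i j * y j) :=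
        Finset.sum_congr rfl fun i _ => Finset.sum_congr rfl fun j _ => hstep i j
    _ = ∫ s in Set.Ioi (0:ℝ), ∑ i, ∑ j, x i * (f s i j * y j) := by
        rw [MeasureTheory.integral_finset_sum]
        · exact Finset.sum_congr rfl fun i _ => (MeasureTheory.integral_finset_sum _
            fun j _ => (((hf i j).mul_const (y j)).const_mul (x i))).symm
        · intro i _
          exact MeasureTheory.integrable_finset_sum _
            fun j _ => (((hf i j).mul_const (y j)).const_mul (x i))
    _ = ∫ s in Set.Ioi (0:ℝ), x ⬝ᵥ (f s *ᵥ y) := by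
        refine MeasureTheory.integral_congr_ae (Filter.Eventually.of_forall fun s => ?_)
        simp [dotProduct, mulVec, Finset.mul_sum]

lemma mul_integral_entry (A G : Matrix (Fin n) (Fin n) ℂ) (f : ℝ → Matrix (Fin n) (Fin n) ℂ)
    (hG : ∀ i j, G i j = ∫ s in Set.Ioi (0:ℝ), f s i j)
    (hf : ∀ i j, IntegrableOn (fun s => f s i j) (Set.Ioi 0)) (i j : Fin n) :
    (A * G) i j = ∫ s in Set.Ioi (0:ℝ), (A * f s) i j := by
  calc (A * G) i j
      = ∑ k, A i k * ∫ s in Set.Ioi (0:ℝ), f s k j := by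
        simp only [Matrix.mul_apply]
        exact Finset.sum_congr rfl fun k _ => by rw [hG]
    _ = ∑ k, ∫ s in Set.Ioi (0:ℝ), A i k * f s k j :=
        Finset.sum_congr rfl fun k _ => (MeasureTheory.integral_const_mul _ _).symm
    _ = ∫ s in Set.Ioi (0:ℝ), ∑ k, A i k * f s k j :=
        (MeasureTheory.integral_finset_sum _ fun k _ => (hf k j).const_mul _).symm
    _ = ∫ s in Set.Ioi (0:ℝ), (A * f s) i j := by
        refine MeasureTheory.integral_congr_ae (Filter.Eventually.of_forall fun s => ?_)
        simp [Matrix.mul_apply]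

lemma integral_mul_entry (A G : Matrix (Fin n) (Fin n) ℂ) (f : ℝ → Matrix (Fin n) (Fin n) ℂ)
    (hG : ∀ i j, G i j = ∫ s in Set.Ioi (0:ℝ), f s i j)
    (hf : ∀ i j, IntegrableOn (fun s => f s i j) (Set.Ioi 0)) (i j : Fin n) :
    (G * A) i j = ∫ s in Set.Ioi (0:ℝ), (f s * A) i j := by
  calc (G * A) i j
      = ∑ k, (∫ s in Set.Ioi (0:ℝ), f s i k) * A k j := by
        simp only [Matrix.mul_apply]
        exact Finset.sum_congr rfl fun k _ => by rw [hG]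
    _ = ∑ k, ∫ s in Set.Ioi (0:ℝ), f s i k * A k j :=
        Finset.sum_congr rfl fun k _ => (MeasureTheory.integral_mul_const _ _).symm
    _ = ∫ s in Set.Ioi (0:ℝ), ∑ k, f s i k * A k j :=
        (MeasureTheory.integral_finset_sum _ fun k _ => (hf i k).mul_const _).symm
    _ = ∫ s in Set.Ioi (0:ℝ), (f s * A) i j := by
        refine MeasureTheory.integral_congr_ae (Filter.Eventually.of_forall fun s => ?_)
        simp [Matrix.mul_apply]

end LyapMain


/-- For a Hurwitz matrix `M` and PSD `N`, the integrand
`s ↦ exp(s M) N exp(s Mᴴ)` is integrable on `(0, ∞)` and its integral `F` is a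
positive semidefinite Hermitian solution of `M F + F Mᴴ + N = 0`. -/
theorem lyapunov_integral_solution {n : ℕ} (hn : 0 < n)
    (M : Matrix (Fin n) (Fin n) ℂ) (hM : IsHurwitz M)
    (N : Matrix (Fin n) (Fin n) ℂ) (hN : N.PosSemidef) :
    (∀ i j, IntegrableOn
        (fun s : ℝ => (exp (s • M) * N * exp (s • Mᴴ)) i j) (Set.Ioi 0)) ∧
      (lyapunovIntegral M N).PosSemidef ∧
      M * lyapunovIntegral M N + lyapunovIntegral M N * Mᴴ + N = 0 := by
  classical
  obtain ⟨C, ε, hε, hC⟩ := LyapAux2.decay hn M hM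
  have hCH : ∀ s : ℝ, 0 ≤ s → ∀ i j,
      ‖exp (s • Mᴴ) i j‖ ≤ C * Real.exp (-(ε * s)) := by
    intro s hs i j
    rw [LyapMain.exp_smul_conjT, Matrix.conjTranspose_apply]
    rw [show (star (exp (s • M) j i)) = (starRingEnd ℂ) (exp (s • M) j i) from rfl,
      Complex.norm_conj]
    exact hC s hs j i
  have hC0 : 0 ≤ C := by
    have h := hC 0 le_rfl ⟨0, hn⟩ ⟨0, hn⟩
    simp only [mul_zero, neg_zero, Real.exp_zero, mul_one] at h
    exact le_trans (norm_nonneg _) h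
  set K : ℝ := C * C * ∑ p : Fin n × Fin n, ‖N p.1 p.2‖ with hKdef
  have hexp2 : ∀ s : ℝ, Real.exp (-(ε * s)) * Real.exp (-(ε * s))
      = Real.exp (-(2 * ε) * s) := by
    intro s; rw [← Real.exp_add]; ring_nf
  have hPhiB : ∀ s : ℝ, 0 ≤ s → ∀ i j,
      ‖(exp (s • M) * N * exp (s • Mᴴ)) i j‖
        ≤ K * Real.exp (-(2 * ε) * s) := by
    intro s hs i j
    have h1 : (exp (s • M) * N * exp (s • Mᴴ)) i j
        = ∑ k, ∑ l, exp (s • M) i l * N l k * exp (s • Mᴴ) k j := by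
      simp [Matrix.mul_apply, Finset.sum_mul]
    calc ‖(exp (s • M) * N * exp (s • Mᴴ)) i j‖
        ≤ ∑ k, ∑ l, ‖exp (s • M) i l * N l k * exp (s • Mᴴ) k j‖ := by
          rw [h1]
          exact (norm_sum_le _ _).trans
            (Finset.sum_le_sum fun k _ => norm_sum_le _ _)
      _ ≤ ∑ k, ∑ l, (C * Real.exp (-(ε * s))) * ‖N l k‖
            * (C * Real.exp (-(ε * s))) := by
          refine Finset.sum_le_sum fun k _ => Finset.sum_le_sum fun l _ => ?_
          rw [norm_mul, norm_mul]
          have hE := hC s hs i l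
          have hH := hCH s hs k j
          have h2 : ‖exp (s • M) i l‖ * ‖N l k‖
              ≤ (C * Real.exp (-(ε * s))) * ‖N l k‖ :=
            mul_le_mul_of_nonneg_right hE (norm_nonneg _)
          exact mul_le_mul h2 hH (norm_nonneg _)
            (mul_nonneg (mul_nonneg hC0 (Real.exp_nonneg _)) (norm_nonneg _))
      _ = K * Real.exp (-(2 * ε) * s) := by
          have hsw : ∑ k, ∑ l, ‖N l k‖
              = ∑ p : Fin n × Fin n, ‖N p.1 p.2‖ := by
            rw [Fintype.sum_prod_type]
            exact Finset.sum_comm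
          calc ∑ k, ∑ l, (C * Real.exp (-(ε * s))) * ‖N l k‖
                * (C * Real.exp (-(ε * s)))
              = ∑ k, ∑ l, (C * C * (Real.exp (-(ε * s)) * Real.exp (-(ε * s))))
                  * ‖N l k‖ :=
                Finset.sum_congr rfl fun k _ => Finset.sum_congr rfl fun l _ => by ring
            _ = (C * C * (Real.exp (-(ε * s)) * Real.exp (-(ε * s))))
                  * ∑ k, ∑ l, ‖N l k‖ := by
                simp only [← Finset.mul_sum]
            _ = K * Real.exp (-(2 * ε) * s) := by
                rw [hexp2, hsw, hKdef]; ring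
  have h2ε : (0:ℝ) < 2 * ε := by linarith
  have hint : ∀ i j, IntegrableOn
      (fun s : ℝ => (exp (s • M) * N * exp (s • Mᴴ)) i j) (Set.Ioi 0) := by
    intro i j
    have hg : IntegrableOn (fun s : ℝ => K * Real.exp (-(2*ε) * s)) (Set.Ioi 0) :=
      (exp_neg_integrableOn_Ioi 0 h2ε).const_mul K
    refine Integrable.mono' hg
      ((LyapMain.continuous_phi_entry M N i j).aestronglyMeasurable.restrict) ?_
    filter_upwards [ae_restrict_mem measurableSet_Ioi] with s hs
    exact hPhiB s (le_of_lt hs) i j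
  have htend : ∀ i j, Filter.Tendsto
      (fun s : ℝ => (exp (s • M) * N * exp (s • Mᴴ)) i j)
      Filter.atTop (nhds 0) := by
    intro i j
    have hg0 : Filter.Tendsto (fun s : ℝ => K * Real.exp (-(2*ε) * s))
        Filter.atTop (nhds 0) := by
      have h1 : Filter.Tendsto (fun s : ℝ => -(2*ε) * s) Filter.atTop Filter.atBot :=
        (Filter.tendsto_const_mul_atBot_of_neg (show -(2*ε) < (0:ℝ) by linarith)).2
          Filter.tendsto_id
      have h2 := Real.tendsto_exp_atBot.comp h1
      have h3 := h2.const_mul K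
      simpa using h3
    refine squeeze_zero_norm' ?_ hg0
    filter_upwards [Filter.eventually_ge_atTop (0:ℝ)] with s hs
    exact hPhiB s hs i j
  have hG : ∀ i j, (lyapunovIntegral M N) i j
      = ∫ s in Set.Ioi (0:ℝ), (exp (s • M) * N * exp (s • Mᴴ)) i j :=
    fun i j => rfl
  refine ⟨hint, Matrix.posSemidef_iff_dotProduct_mulVec.mpr ⟨?_, ?_⟩, ?_⟩
  · -- Hermitian
    have hPhiHerm : ∀ s : ℝ, ((exp (s • M) * N * exp (s • Mᴴ)))ᴴ
        = exp (s • M) * N * exp (s • Mᴴ) := by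
      intro s
      rw [LyapMain.exp_smul_conjT]
      simp [Matrix.conjTranspose_mul, Matrix.conjTranspose_conjTranspose,
        hN.1.eq, Matrix.mul_assoc]
    apply Matrix.ext
    intro i j
    rw [Matrix.conjTranspose_apply, hG, hG,
      show (star (∫ s in Set.Ioi (0:ℝ), (exp (s • M) * N * exp (s • Mᴴ)) j i))
        = (starRingEnd ℂ) (∫ s in Set.Ioi (0:ℝ),
            (exp (s • M) * N * exp (s • Mᴴ)) j i) from rfl,
      ← integral_conj]
    refine MeasureTheory.integral_congr_ae (Filter.Eventually.of_forall fun s => ?_)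
    have := congrFun (congrFun (hPhiHerm s) i) j
    rw [Matrix.conjTranspose_apply] at this
    exact this
  · -- PSD inequality
    intro x
    have hFx : star x ⬝ᵥ (lyapunovIntegral M N *ᵥ x)
        = ∫ s in Set.Ioi (0:ℝ), star x ⬝ᵥ ((exp (s • M) * N * exp (s • Mᴴ)) *ᵥ x) :=
      LyapMain.dot_integral (lyapunovIntegral M N) _ hG hint (star x) x
    have hg : ∀ s : ℝ, 0 ≤ star x ⬝ᵥ ((exp (s • M) * N * exp (s • Mᴴ)) *ᵥ x) := by
      intro s
      rw [LyapMain.exp_smul_conjT]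
      have h1 : (exp (s • M) * N * (exp (s • M))ᴴ) *ᵥ x
          = exp (s • M) *ᵥ (N *ᵥ ((exp (s • M))ᴴ *ᵥ x)) := by
        rw [mulVec_mulVec, mulVec_mulVec]
      rw [h1, dotProduct_mulVec,
        show star x ᵥ* exp (s • M) = star ((exp (s • M))ᴴ *ᵥ x) by
          rw [star_mulVec, Matrix.conjTranspose_conjTranspose]]
      exact hN.dotProduct_mulVec_nonneg ((exp (s • M))ᴴ *ᵥ x)
    rw [hFx]
    have him : (fun s : ℝ => star x ⬝ᵥ ((exp (s • M) * N * exp (s • Mᴴ)) *ᵥ x))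
        = fun s : ℝ => (((star x ⬝ᵥ ((exp (s • M) * N * exp (s • Mᴴ)) *ᵥ x)).re : ℝ) : ℂ) := by
      funext s
      have h0 := Complex.nonneg_iff.1 (hg s)
      exact (Complex.ext (by simp) (by simp [← h0.2])).symm
    rw [him,
      show (∫ s in Set.Ioi (0:ℝ),
          (((star x ⬝ᵥ ((exp (s • M) * N * exp (s • Mᴴ)) *ᵥ x)).re : ℝ) : ℂ))
        = (((∫ s in Set.Ioi (0:ℝ),
            (star x ⬝ᵥ ((exp (s • M) * N * exp (s • Mᴴ)) *ᵥ x)).re) : ℝ) : ℂ)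
        from integral_ofReal]
    rw [Complex.zero_le_real]
    exact MeasureTheory.setIntegral_nonneg measurableSet_Ioi
      fun s _ => (Complex.nonneg_iff.1 (hg s)).1
  · -- Lyapunov equation
    apply Matrix.ext
    intro i j
    have hMF : (M * lyapunovIntegral M N) i j
        = ∫ s in Set.Ioi (0:ℝ), (M * (exp (s • M) * N * exp (s • Mᴴ))) i j :=
      LyapMain.mul_integral_entry M _ _ hG hint i j
    have hFM : (lyapunovIntegral M N * Mᴴ) i j
        = ∫ s in Set.Ioi (0:ℝ), ((exp (s • M) * N * exp (s • Mᴴ)) * Mᴴ) i j :=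
      LyapMain.integral_mul_entry Mᴴ _ _ hG hint i j
    have hintMF : IntegrableOn
        (fun s : ℝ => (M * (exp (s • M) * N * exp (s • Mᴴ))) i j) (Set.Ioi 0) := by
      have hfun : (fun s : ℝ => (M * (exp (s • M) * N * exp (s • Mᴴ))) i j)
          = fun s : ℝ => ∑ k, M i k * (exp (s • M) * N * exp (s • Mᴴ)) k j := by
        funext s; simp [Matrix.mul_apply]
      rw [hfun]
      exact MeasureTheory.integrable_finset_sum _ fun k _ => (hint k j).const_mul _
    have hintFM : IntegrableOn
        (fun s : ℝ => ((exp (s • M) * N * exp (s • Mᴴ)) * Mᴴ) i j) (Set.Ioi 0) := by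
      have hfun : (fun s : ℝ => ((exp (s • M) * N * exp (s • Mᴴ)) * Mᴴ) i j)
          = fun s : ℝ => ∑ k, (exp (s • M) * N * exp (s • Mᴴ)) i k * Mᴴ k j := by
        funext s; simp [Matrix.mul_apply]
      rw [hfun]
      exact MeasureTheory.integrable_finset_sum _ fun k _ => (hint i k).mul_const _
    have hFTC : (∫ s in Set.Ioi (0:ℝ),
          ((M * (exp (s • M) * N * exp (s • Mᴴ))) i j
            + ((exp (s • M) * N * exp (s • Mᴴ)) * Mᴴ) i j))
        = 0 - (exp ((0:ℝ) • M) * N * exp ((0:ℝ) • Mᴴ)) i j := by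
      exact MeasureTheory.integral_Ioi_of_hasDerivAt_of_tendsto'
        (fun s _ => LyapMain.hasDerivAt_phi_entry M N s i j)
        (hintMF.add hintFM) (htend i j)
    have hΦ0 : (exp ((0:ℝ) • M) * N * exp ((0:ℝ) • Mᴴ)) i j = N i j := by
      simp [zero_smul, exp_zero]
    have hadd : (M * lyapunovIntegral M N + lyapunovIntegral M N * Mᴴ + N) i j
        = (M * lyapunovIntegral M N) i j + (lyapunovIntegral M N * Mᴴ) i j + N i j := rfl
    rw [hadd, hMF, hFM, ← MeasureTheory.integral_add hintMF hintFM, hFTC, hΦ0]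
    simp
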